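/- Let F be a field of characteristic p > 2 and G ≅ ⟨Q_8, g⟩ × E × P, where Q_8 = ⟨x, y : x^4 = 1, x^2 = y^2, x^y = x^{-1}⟩, E is an elementary abelian 2-group (E^2 = 1), P is a finite p-group, g commutes with x and y, g^2 = x^2, and the orientation σ has kernel N = Q_8 × E × P. Then the symmetric elements under the oriented classical involution satisfy (FG)^+ ⊆ FG·Δ(P) + ζ(FG), where ζ(FG) is the center of FG. -/

import Mathlib

/-- The oriented classical involution of the group algebra `FG` attached to an
orientation `σ : G → {±1}`: `(Σ α_g g)^* = Σ α_g σ(g) g⁻¹`. -/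
noncomputable def orInv {F : Type*} [Field F] {G : Type*} [Group G] (σ : G →* ℤˣ)
    (α : MonoidAlgebra F G) : MonoidAlgebra F G :=
  MonoidAlgebra.ofCoeff (α.coeff.sum fun g a => Finsupp.single g⁻¹ (((σ g : ℤ) : F) * a))

section auxLemmas
variable {F : Type*} [Field F] {G : Type*} [Group G] (σ : G →* ℤˣ)

lemma orInv_single (w : G) (a : F) :
    orInv σ (MonoidAlgebra.single w a) = MonoidAlgebra.single w⁻¹ (((σ w : ℤ) : F) * a) := by
  classical
  unfold orInv
  rw [MonoidAlgebra.coeff_single, Finsupp.sum_single_index (by simp)]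
  rfl

lemma orInv_add (α β : MonoidAlgebra F G) :
    orInv σ (α + β) = orInv σ α + orInv σ β := by
  classical
  unfold orInv
  rw [MonoidAlgebra.coeff_add, Finsupp.sum_add_index' (by simp) (by intros; simp [mul_add, Finsupp.single_add])]
  rfl

lemma orInv_zero : orInv σ (0 : MonoidAlgebra F G) = 0 := by
  unfold orInv; exact congrArg MonoidAlgebra.ofCoeff Finsupp.sum_zero_index

lemma orInv_apply (α : MonoidAlgebra F G) (w : G) :
    (orInv σ α).coeff w = ((σ w⁻¹ : ℤ) : F) * α.coeff w⁻¹ := by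
  classical
  induction α using MonoidAlgebra.induction_linear with
  | zero => simp [orInv_zero]
  | add f g hf hg => rw [orInv_add, MonoidAlgebra.coeff_add, Finsupp.add_apply, hf, hg, MonoidAlgebra.coeff_add, Finsupp.add_apply, mul_add]
  | single u a =>
    rw [orInv_single]
    rcases eq_or_ne u w⁻¹ with h | h
    · subst h; simp
    · rw [MonoidAlgebra.coeff_single, MonoidAlgebra.coeff_single, Finsupp.single_apply, Finsupp.single_apply]
      rw [if_neg (by simpa [inv_eq_iff_eq_inv] using h), if_neg (fun hc => h hc), mul_zero]

lemma orInv_mapDomain (f : G →* G) (hσf : ∀ w, σ (f w) = σ w) (α : MonoidAlgebra F G) :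
    orInv σ (MonoidAlgebra.mapDomain f α) = MonoidAlgebra.mapDomain f (orInv σ α) := by
  induction α using MonoidAlgebra.induction_linear with
  | zero => simp [orInv_zero]
  | add a b ha hb => rw [MonoidAlgebra.mapDomain_add, orInv_add, orInv_add, MonoidAlgebra.mapDomain_add, ha, hb]
  | single u a =>
    rw [MonoidAlgebra.mapDomain_single, orInv_single, orInv_single, MonoidAlgebra.mapDomain_single,
      ← map_inv, hσf]

end auxLemmas

set_option maxHeartbeats 1600000 in
/-- Let `char F = p > 2` and `G ≅ ⟨Q₈, g⟩ × E × P`, where `⟨x,y⟩ ≅ Q₈`, `E` is an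
elementary abelian `2`-group, `P` is a finite `p`-group, `g` commutes with `x, y`,
`g² = x²`, and the orientation `σ` has kernel `N = Q₈ × E × P` (i.e. `σ` is trivial
on `x, y, E, P` and `σ(g) = -1`). Then `(FG)^+ ⊆ FG·Δ(P) + ζ(FG)`. -/
theorem stmt_12 {F : Type*} [Field F] {p : ℕ} (hp : 2 < p) [CharP F p]
    {Q E P : Type*} [Group Q] [Group E] [Group P] [Finite P]
    (hPp : IsPGroup p P) (hE : ∀ e : E, e ^ 2 = 1)
    (x y g : Q) (hx4 : x ^ 4 = 1) (hx2 : x ^ 2 ≠ 1) (hy2 : y ^ 2 = x ^ 2)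
    (hxy : y⁻¹ * x * y = x⁻¹) (hgx : g * x = x * g) (hgy : g * y = y * g)
    (hg2 : g ^ 2 = x ^ 2)
    (hgen : Subgroup.closure {x, y, g} = (⊤ : Subgroup Q))
    (σ : (Q × E × P) →* ℤˣ)
    (hσx : σ (x, 1, 1) = 1) (hσy : σ (y, 1, 1) = 1) (hσg : σ (g, 1, 1) = -1)
    (hσE : ∀ e : E, σ (1, e, 1) = 1) (hσP : ∀ h : P, σ (1, 1, h) = 1) :
    ∀ α ∈ {α : MonoidAlgebra F (Q × E × P) | orInv σ α = α},
      ∃ β ∈ ((⊤ : Submodule F (MonoidAlgebra F (Q × E × P))) *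
          Submodule.span F {z : MonoidAlgebra F (Q × E × P) |
            ∃ h : P, z = MonoidAlgebra.of F (Q × E × P) (1, 1, h) - 1}),
        ∃ c ∈ Subring.center (MonoidAlgebra F (Q × E × P)), α = β + c := by
  classical
  intro α hα
  let σQ : Q →* ℤˣ := σ.comp (MonoidHom.inl Q (E × P))
  have hσQx : σQ x = 1 := hσx
  have hσQy : σQ y = 1 := hσy
  have hσQg : σQ g = -1 := hσg
  -- generic centrality tool
  have key : ∀ a : Q, (x * a = a * x) → (y * a = a * y) → (g * a = a * g) →
      ∀ q : Q, a * q = q * a := by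
    intro a hax hay hag q
    have hq : q ∈ Subgroup.closure ({x, y, g} : Set Q) := by rw [hgen]; trivial
    have hle : Subgroup.closure ({x, y, g} : Set Q) ≤ Subgroup.centralizer {a} := by
      rw [Subgroup.closure_le]
      rintro s hs
      rw [SetLike.mem_coe, Subgroup.mem_centralizer_iff]
      rintro m rfl
      · rcases hs with rfl | rfl | rfl
        · exact hax.symm
        · exact hay.symm
        · exact hag.symm
    have := hle hq
    rw [Subgroup.mem_centralizer_iff] at this
    exact this a rfl
  -- basic relations
  have hx3 : x⁻¹ = x ^ 3 := by
    refine inv_eq_of_mul_eq_one_right ?_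
    rw [← pow_succ']; exact hx4
  have hg4 : g ^ 4 = 1 := by
    have : g ^ 4 = (g ^ 2) ^ 2 := by rw [← pow_mul]
    rw [this, hg2, ← pow_mul]; exact hx4
  have hyx : y * x = x⁻¹ * y := by
    have h1 : y⁻¹ * x⁻¹ * y = x := by
      have := congrArg Inv.inv hxy
      simpa [mul_inv_rev, mul_assoc] using this
    have h2 : y * (y⁻¹ * x⁻¹ * y) = y * x := by rw [h1]
    rw [← h2]; group
  have hyxn : ∀ n : ℕ, y * x ^ n = x ^ (3 * n) * y := by
    intro n
    induction n with
    | zero => simp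
    | succ n ih =>
      rw [pow_succ, ← mul_assoc, ih, mul_assoc, hyx, hx3, Nat.mul_succ, pow_add]
      group
  -- g is central
  have hgC : ∀ q : Q, Commute g q := fun q => key g hgx.symm hgy.symm rfl q
  -- x^2 is central
  have ht2 : y * x ^ 2 = x ^ 2 * y := by
    rw [hyxn 2]
    congr 1
    rw [show 3 * 2 = 2 + 4 by norm_num, pow_add, hx4, mul_one]
  have htC : ∀ q : Q, Commute (x ^ 2) q := by
    intro q
    exact key (x ^ 2) (Commute.pow_right (Commute.refl x) 2).eq ht2 (hgC (x^2)).eq q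
  -- commuting helpers
  have cg : ∀ (q : Q) (k : ℕ), g ^ k * q = q * g ^ k := fun q k => ((hgC q).pow_left k).eq
  have gmove : ∀ (k : ℕ) (a b : Q), g ^ k * (a * b) = a * (g ^ k * b) := by
    intro k a b; rw [← mul_assoc, cg a k, mul_assoc]
  have ymoven : ∀ (n : ℕ) (b : Q), y * (x ^ n * b) = x ^ (3 * n) * (y * b) := by
    intro n b; rw [← mul_assoc, hyxn, mul_assoc]
  have yy : ∀ c : Q, y * (y * c) = x ^ 2 * c := by
    intro c; rw [← mul_assoc, ← pow_two, hy2]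
  -- normal form products
  have P1 : ∀ i k i' k' : ℕ, (x^i * g^k) * (x^i' * g^k') = x^(i+i') * g^(k+k') := by
    intro i k i' k'
    simp only [mul_assoc]
    rw [gmove, ← pow_add]
    simp only [← mul_assoc, ← pow_add]
  have P2 : ∀ i k i' k' : ℕ, (x^i * g^k) * (x^i' * y * g^k') = x^(i+i') * y * g^(k+k') := by
    intro i k i' k'
    simp only [mul_assoc]
    rw [gmove, gmove, ← pow_add]
    simp only [← mul_assoc, ← pow_add]
  have P3 : ∀ i k i' k' : ℕ, (x^i * y * g^k) * (x^i' * g^k') = x^(i+3*i') * y * g^(k+k') := by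
    intro i k i' k'
    simp only [mul_assoc]
    rw [gmove, ymoven, ← pow_add]
    simp only [← mul_assoc, ← pow_add]
  have P4 : ∀ i k i' k' : ℕ, (x^i * y * g^k) * (x^i' * y * g^k') = x^(i+3*i'+2) * g^(k+k') := by
    intro i k i' k'
    simp only [mul_assoc]
    rw [gmove, gmove, ← pow_add, ymoven, yy]
    simp only [← mul_assoc, ← pow_add]
    rw [← Nat.add_assoc]
  have P3' : ∀ i k i' : ℕ, (x^i * y * g^k) * x^i' = x^(i+3*i') * y * g^k := by
    intro i k i'
    have := P3 i k i' 0
    simpa using this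
  -- normal form
  have hNF : ∀ q : Q, ∃ i k : ℕ, q = x^i * g^k ∨ q = x^i * y * g^k := by
    let S : Subgroup Q :=
      { carrier := {q | ∃ i k : ℕ, q = x^i * g^k ∨ q = x^i * y * g^k}
        one_mem' := ⟨0, 0, Or.inl (by simp)⟩
        mul_mem' := by
          rintro a b ⟨i, k, rfl | rfl⟩ ⟨i', k', rfl | rfl⟩
          · exact ⟨i+i', k+k', Or.inl (P1 i k i' k')⟩
          · exact ⟨i+i', k+k', Or.inr (P2 i k i' k')⟩
          · exact ⟨i+3*i', k+k', Or.inr (P3 i k i' k')⟩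
          · exact ⟨i+3*i'+2, k+k', Or.inl (P4 i k i' k')⟩
        inv_mem' := by
          rintro a ⟨i, k, rfl | rfl⟩
          · refine ⟨3*i, 3*k, Or.inl ?_⟩
            refine inv_eq_of_mul_eq_one_right ?_
            rw [P1, show i+3*i = 4*i by ring, show k+3*k = 4*k by ring,
              pow_mul, pow_mul, hx4, hg4, one_pow, one_pow, mul_one]
          · refine ⟨i+2, 3*k, Or.inr ?_⟩
            refine inv_eq_of_mul_eq_one_right ?_
            rw [P4, show i+3*(i+2)+2 = 4*(i+2) by ring, show k+3*k = 4*k by ring,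
              pow_mul, pow_mul, hx4, hg4, one_pow, one_pow, mul_one] }
    intro q
    have hq : q ∈ Subgroup.closure ({x, y, g} : Set Q) := by rw [hgen]; trivial
    have hle : Subgroup.closure ({x, y, g} : Set Q) ≤ S := by
      rw [Subgroup.closure_le]
      rintro s (rfl | rfl | rfl)
      · exact ⟨1, 0, Or.inl (by simp)⟩
      · exact ⟨0, 0, Or.inr (by simp)⟩
      · exact ⟨0, 1, Or.inl (by simp)⟩
    exact hle hq
  -- mod-2 power facts
  have hx2pow : ∀ n : ℕ, (x^2)^n = (x^2)^(n % 2) :=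
    fun n => pow_eq_pow_mod n (by rw [← pow_mul]; exact hx4)
  have hgg : ∀ k : ℕ, g^(2*k) = (x^2)^(k % 2) := by
    intro k
    rw [pow_mul, hg2, hx2pow]
  have hx2i : ∀ i : ℕ, x^(3*i) = (x^2)^(i % 2) * x^i := by
    intro i
    rw [show 3*i = 2*i + i by ring, pow_add, pow_mul, hx2pow]
  -- squares
  have hsq1 : ∀ i k : ℕ, (x^i * g^k)^2 = (x^2)^(i % 2) * (x^2)^(k % 2) := by
    intro i k
    rw [pow_two, P1, show i+i = 2*i by ring, show k+k = 2*k by ring, pow_mul, hx2pow, hgg]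
  have hsq2 : ∀ i k : ℕ, (x^i * y * g^k)^2 = x^2 * (x^2)^(k % 2) := by
    intro i k
    rw [pow_two, P4, show i+3*i+2 = 4*i+2 by ring, show k+k = 2*k by ring, pow_add,
      pow_mul, hx4, one_pow, one_mul, hgg]
  -- conjugation computations
  have hcx2 : ∀ i k : ℕ, x * (x^i * y * g^k) * x⁻¹ = x^2 * (x^i * y * g^k) := by
    intro i k
    have l1 : x * (x^i * y * g^k) = x^(1+i) * y * g^k := by
      simp only [← mul_assoc, ← pow_add]
      rw [show x * x^i = x^(1+i) by rw [pow_add, pow_one]]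
    rw [l1, hx3, P3', show 1+i+3*3 = (2+i) + 4*2 by ring, pow_add, pow_mul, hx4, one_pow, mul_one]
    simp only [← mul_assoc, ← pow_add]
  have hcy1 : ∀ i k : ℕ, y * (x^i * g^k) * y⁻¹ = (x^2)^(i % 2) * (x^i * g^k) := by
    intro i k
    have hgy' : g^k * y⁻¹ = y⁻¹ * g^k := cg y⁻¹ k
    calc y * (x^i * g^k) * y⁻¹ = (y * x^i) * (g^k * y⁻¹) := by simp only [mul_assoc]
    _ = (x^(3*i) * y) * (y⁻¹ * g^k) := by rw [hyxn, hgy']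
    _ = x^(3*i) * g^k := by
        rw [mul_assoc, ← mul_assoc y, mul_inv_cancel, one_mul]
    _ = (x^2)^(i % 2) * (x^i * g^k) := by rw [hx2i, mul_assoc]
  have hcy2 : ∀ i k : ℕ, y * (x^i * y * g^k) * y⁻¹ = (x^2)^(i % 2) * (x^i * y * g^k) := by
    intro i k
    have hgy' : g^k * y⁻¹ = y⁻¹ * g^k := cg y⁻¹ k
    calc y * (x^i * y * g^k) * y⁻¹ = (y * x^i) * y * (g^k * y⁻¹) := by simp only [mul_assoc]
    _ = (x^(3*i) * y) * y * (y⁻¹ * g^k) := by rw [hyxn, hgy']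
    _ = x^(3*i) * y * g^k := by
        rw [mul_assoc (x^(3*i) * y), ← mul_assoc y y⁻¹, mul_inv_cancel, one_mul]
    _ = (x^2)^(i % 2) * (x^i * y * g^k) := by rw [hx2i]; simp only [mul_assoc]
  -- sigma values
  have hσ1 : ∀ i k : ℕ, σQ (x^i * g^k) = (-1)^k := by
    intro i k
    rw [map_mul, map_pow, map_pow, hσQx, hσQg, one_pow, one_mul]
  have hσ2 : ∀ i k : ℕ, σQ (x^i * y * g^k) = (-1)^k := by
    intro i k
    rw [map_mul, map_mul, map_pow, map_pow, hσQx, hσQy, hσQg, one_pow, one_mul, one_mul]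
  have hneg0 : ∀ k : ℕ, k % 2 = 0 → ((-1 : ℤˣ))^k = 1 :=
    fun k hk => Even.neg_one_pow (Nat.even_iff.mpr hk)
  have hneg1 : ∀ k : ℕ, k % 2 = 1 → ((-1 : ℤˣ))^k = -1 :=
    fun k hk => Odd.neg_one_pow (Nat.odd_iff.mpr hk)
  have hx22 : x^2 * x^2 = 1 := by rw [← pow_add]; exact hx4
  have hsub : ∀ (q c : Q) (k : ℕ), c = x^2 * q → q^2 = x^2 * (x^2)^(k % 2) → σQ q = (-1)^k →
      (c = q⁻¹ ∧ σQ q = 1) ∨ (q^2 = 1 ∧ σQ q = -1) := by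
    intro q c k hc hq2 hσq
    rcases Nat.mod_two_eq_zero_or_one k with hk | hk
    · left
      refine ⟨?_, by rw [hσq, hneg0 k hk]⟩
      rw [hc]
      refine eq_inv_of_mul_eq_one_left ?_
      rw [mul_assoc, ← pow_two, hq2, hk, pow_zero, mul_one, hx22]
    · right
      refine ⟨?_, by rw [hσq, hneg1 k hk]⟩
      rw [hq2, hk, pow_one, hx22]
  have htri : ∀ u₀ ∈ ({x, y, g} : Set Q), ∀ q : Q,
      u₀*q*u₀⁻¹ = q ∨ (u₀*q*u₀⁻¹ = q⁻¹ ∧ σQ q = 1) ∨ (q^2 = 1 ∧ σQ q = -1) := by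
    intro u₀ hu q
    simp only [Set.mem_insert_iff, Set.mem_singleton_iff] at hu
    rcases hu with h | h | h <;> rw [h]
    · obtain ⟨i, k, rfl | rfl⟩ := hNF q
      · left
        have hcm : Commute x (x^i * g^k) :=
          ((Commute.refl x).pow_right i).mul_right ((hgC x).symm.pow_right k)
        rw [hcm.eq, mul_inv_cancel_right]
      · right
        exact hsub _ _ k (hcx2 i k) (hsq2 i k) (hσ2 i k)
    · obtain ⟨i, k, rfl | rfl⟩ := hNF q
      · rcases Nat.mod_two_eq_zero_or_one i with hi | hi
        · left; rw [hcy1 i k, hi, pow_zero, one_mul]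
        · right
          refine hsub _ _ k ?_ ?_ (hσ1 i k)
          · rw [hcy1 i k, hi, pow_one]
          · rw [hsq1 i k, hi, pow_one]
      · rcases Nat.mod_two_eq_zero_or_one i with hi | hi
        · left; rw [hcy2 i k, hi, pow_zero, one_mul]
        · right
          refine hsub _ _ k ?_ (hsq2 i k) (hσ2 i k)
          rw [hcy2 i k, hi, pow_one]
    · left
      rw [(hgC q).eq, mul_inv_cancel_right]
  -- elementary abelian E
  have he1 : ∀ e : E, e⁻¹ = e :=
    fun e => inv_eq_of_mul_eq_one_right (by rw [← pow_two]; exact hE e)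
  have hEcomm : ∀ a b : E, a * b = b * a := by
    intro a b
    calc a * b = (a * b)⁻¹ := (he1 (a*b)).symm
    _ = b⁻¹ * a⁻¹ := mul_inv_rev a b
    _ = b * a := by rw [he1, he1]
  -- the projection homomorphism
  let fm : (Q × E × P) →* (Q × E × P) :=
    { toFun := fun w => (w.1, w.2.1, 1)
      map_one' := by simp
      map_mul' := fun a b => by simp [Prod.ext_iff] }
  have hσqe : ∀ (q : Q) (e : E), σ (q, e, 1) = σ (q, 1, 1) := by
    intro q e
    have hv : ((q, e, 1) : Q × E × P) = (q, 1, 1) * (1, e, 1) := by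
      simp [Prod.ext_iff]
    rw [hv, map_mul, hσE, mul_one]
  have hσf : ∀ w : Q × E × P, σ (fm w) = σ w := by
    rintro ⟨q, e, h⟩
    have hv : ((q, e, h) : Q × E × P) = (q, e, 1) * (1, 1, h) := by
      simp [Prod.ext_iff]
    show σ (q, e, 1) = σ (q, e, h)
    rw [hv, map_mul, hσP, mul_one]
  set c : MonoidAlgebra F (Q × E × P) := MonoidAlgebra.mapDomain fm α with hcdef
  have hcsymm : orInv σ c = c := by
    rw [hcdef, orInv_mapDomain σ fm hσf, hα]
  have hcs : ∀ w : Q × E × P, c.coeff w = ((σ w : ℤ) : F) * c.coeff w⁻¹ := by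
    intro w
    conv_lhs => rw [← hcsymm]
    rw [orInv_apply, map_inv, Int.units_inv_eq_self]
  have hz : ∀ w : Q × E × P, w.2.2 ≠ 1 → c.coeff w = 0 := by
    intro w hw
    by_contra hcw
    have hmem : w ∈ c.coeff.support := Finsupp.mem_support_iff.mpr hcw
    rw [hcdef] at hmem
    have hsub := Finsupp.mapDomain_support (f := fm) (s := α.coeff) hmem
    simp only [Finset.mem_image] at hsub
    obtain ⟨a, -, ha⟩ := hsub
    apply hw
    rw [← ha]
    rfl
  have h2F : (2 : F) ≠ 0 := by
    intro h2
    have hdvd := (CharP.cast_eq_zero_iff F p 2).mp (by exact_mod_cast h2)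
    exact absurd (Nat.le_of_dvd (by norm_num) hdvd) (by omega)
  have hzero2 : ∀ w : Q × E × P, w ^ 2 = 1 → σ w = -1 → c.coeff w = 0 := by
    intro w hw2 hσw
    have hwinv : w⁻¹ = w := inv_eq_of_mul_eq_one_right (by rw [← pow_two]; exact hw2)
    have h := hcs w
    rw [hwinv, hσw] at h
    rw [Units.val_neg, Units.val_one, Int.cast_neg, Int.cast_one, neg_mul, one_mul] at h
    have h2 : (2 : F) * c.coeff w = 0 := by linear_combination h
    rcases mul_eq_zero.mp h2 with h' | h'
    · exact absurd h' h2F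
    · exact h'
  have hp2 : ∀ (q : Q) (e : E) (hh : P), ((q, e, hh) : Q × E × P) ^ 2 = (q^2, e^2, hh^2) := by
    intro q e hh
    rw [pow_two, pow_two, pow_two, pow_two]
    rfl
  -- generators of Q-type act trivially on coefficients of c
  have hgenQ : ∀ u₀ : Q,
      (∀ q : Q, u₀*q*u₀⁻¹ = q ∨ (u₀*q*u₀⁻¹ = q⁻¹ ∧ σQ q = 1) ∨ (q^2 = 1 ∧ σQ q = -1)) →
      ∀ w : Q × E × P, c.coeff ((u₀,1,1) * w * ((u₀,1,1) : Q × E × P)⁻¹) = c.coeff w := by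
    intro u₀ htriu w
    rcases w with ⟨q, e, h⟩
    have hcj : ((u₀,1,1) : Q × E × P) * (q,e,h) * ((u₀,1,1) : Q × E × P)⁻¹
        = (u₀*q*u₀⁻¹, e, h) := by
      simp [Prod.ext_iff]
    rw [hcj]
    by_cases hh : h = 1
    · subst hh
      rcases htriu q with h1 | ⟨h1, h2⟩ | ⟨h1, h2⟩
      · rw [h1]
      · rw [h1]
        have hinv : ((q,e,1) : Q × E × P)⁻¹ = (q⁻¹, e, 1) := by
          simp [Prod.ext_iff, he1 e]
        rw [← hinv]
        have hs := hcs (q, e, 1)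
        rw [hσqe q e, show σ (q,1,1) = σQ q from rfl, h2] at hs
        simpa using hs.symm
      · have hw2 : ((q,e,1) : Q × E × P) ^ 2 = 1 := by
          rw [hp2, h1, hE e, one_pow]
          rfl
        have hσw : σ (q,e,1) = -1 := by
          rw [hσqe q e]
          exact h2
        rw [hzero2 _ hw2 hσw]
        have hq2' : (u₀*q*u₀⁻¹)^2 = 1 := by
          rw [show (u₀*q*u₀⁻¹)^2 = u₀*q^2*u₀⁻¹ from by rw [pow_two, pow_two]; group, h1]
          group
        have hw2' : ((u₀*q*u₀⁻¹, e, 1) : Q × E × P) ^ 2 = 1 := by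
          rw [hp2, hq2', hE e, one_pow]
          rfl
        have hσw' : σ (u₀*q*u₀⁻¹, e, 1) = -1 := by
          rw [hσqe, show σ (u₀*q*u₀⁻¹,1,1) = σQ (u₀*q*u₀⁻¹) from rfl,
            map_mul, map_mul, map_inv, mul_comm (σQ u₀) (σQ q), mul_inv_cancel_right]
          exact h2
        rw [hzero2 _ hw2' hσw']
    · rw [hz (u₀*q*u₀⁻¹, e, h) hh, hz (q, e, h) hh]
  have hTE : ∀ (e : E) (w : Q × E × P), c.coeff ((1,e,1) * w * ((1,e,1) : Q × E × P)⁻¹) = c.coeff w := by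
    intro e w
    rcases w with ⟨q, e', h⟩
    have hco : ((1,e,1) : Q × E × P) * (q,e',h) = (q,e',h) * (1,e,1) := by
      simp [Prod.ext_iff, hEcomm e e']
    rw [hco, mul_inv_cancel_right]
  have hTP : ∀ (h : P) (w : Q × E × P), c.coeff ((1,1,h) * w * ((1,1,h) : Q × E × P)⁻¹) = c.coeff w := by
    intro h w
    rcases w with ⟨q, e, h'⟩
    have hcj : ((1,1,h) : Q × E × P) * (q,e,h') * ((1,1,h) : Q × E × P)⁻¹
        = (q, e, h*h'*h⁻¹) := by
      simp [Prod.ext_iff, mul_assoc]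
    rw [hcj]
    by_cases h1 : h' = 1
    · subst h1
      simp
    · have hne : h * h' * h⁻¹ ≠ 1 := by
        intro hcon
        apply h1
        have hx := congrArg (fun z => h⁻¹ * z * h) hcon
        simpa [mul_assoc] using hx
      rw [hz (q, e, h*h'*h⁻¹) hne, hz (q, e, h') h1]
  have hconj : ∀ u w : Q × E × P, c.coeff (u * w * u⁻¹) = c.coeff w := by
    let T : Subgroup (Q × E × P) :=
      { carrier := {u | ∀ w, c.coeff (u * w * u⁻¹) = c.coeff w}
        one_mem' := by intro w; simp
        mul_mem' := by
          intro a b ha hb w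
          have h2 := ha (b * w * b⁻¹)
          rw [hb w] at h2
          rw [← h2]
          congr 1
          group
        inv_mem' := by
          intro a ha w
          have h := ha (a⁻¹ * w * a)
          rw [show a * (a⁻¹ * w * a) * a⁻¹ = w from by group] at h
          rw [show a⁻¹ * w * a⁻¹⁻¹ = a⁻¹ * w * a from by rw [inv_inv]]
          exact h.symm }
    intro u w
    have hu : u ∈ T := by
      rcases u with ⟨q, e, h⟩
      have hv : ((q,e,h) : Q × E × P) = (q,1,1) * (1,e,1) * (1,1,h) := by
        simp [Prod.ext_iff]
      rw [hv]
      refine mul_mem (mul_mem ?_ (hTE e)) (hTP h)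
      have hq : q ∈ Subgroup.closure ({x,y,g} : Set Q) := by rw [hgen]; trivial
      have hle : Subgroup.closure ({x,y,g} : Set Q) ≤ T.comap (MonoidHom.inl Q (E × P)) := by
        rw [Subgroup.closure_le]
        intro s hs
        simp only [Set.mem_insert_iff, Set.mem_singleton_iff] at hs
        rw [SetLike.mem_coe, Subgroup.mem_comap]
        rcases hs with hss | hss | hss <;> rw [hss]
        · exact hgenQ x (htri x (by simp))
        · exact hgenQ y (htri y (by simp))
        · exact hgenQ g (htri g (by simp))
      exact hle hq
    exact hu w
  have hcent : c ∈ Subring.center (MonoidAlgebra F (Q × E × P)) := by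
    rw [Subring.mem_center_iff]
    intro b
    induction b using MonoidAlgebra.induction_linear with
    | zero => simp
    | add f1 f2 hf1 hf2 => rw [add_mul, mul_add, hf1, hf2]
    | single u a =>
      ext v
      rw [MonoidAlgebra.coeff_single_mul_apply, MonoidAlgebra.coeff_mul_single_apply]
      rw [show v * u⁻¹ = u * (u⁻¹ * v) * u⁻¹ from by group, hconj]
      ring
  have hβ : ∀ β : MonoidAlgebra F (Q × E × P), β - (show MonoidAlgebra F (Q × E × P) from MonoidAlgebra.mapDomain fm β) ∈
      ((⊤ : Submodule F (MonoidAlgebra F (Q × E × P))) *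
        Submodule.span F {z : MonoidAlgebra F (Q × E × P) |
          ∃ h : P, z = MonoidAlgebra.of F (Q × E × P) (1, 1, h) - 1}) := by
    intro β
    induction β using MonoidAlgebra.induction_linear with
    | zero => rw [MonoidAlgebra.mapDomain_zero, sub_zero]; exact zero_mem _
    | add f1 f2 h1 h2 =>
      rw [MonoidAlgebra.mapDomain_add]
      have heq : f1 + f2 - (MonoidAlgebra.mapDomain fm f1 + MonoidAlgebra.mapDomain fm f2)
          = (f1 - MonoidAlgebra.mapDomain fm f1) + (f2 - MonoidAlgebra.mapDomain fm f2) := by abel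
      rw [heq]
      exact add_mem h1 h2
    | single w a =>
      rw [MonoidAlgebra.mapDomain_single]
      rcases w with ⟨q, e, h⟩
      have hfac : (MonoidAlgebra.single ((q,e,h) : Q × E × P) a : MonoidAlgebra F (Q × E × P))
          - MonoidAlgebra.single (fm (q,e,h)) a
          = MonoidAlgebra.single ((q,e,1) : Q × E × P) a *
            (MonoidAlgebra.of F (Q × E × P) (1,1,h) - 1) := by
        rw [mul_sub, mul_one, MonoidAlgebra.of_apply, MonoidAlgebra.single_mul_single]
        have harg : ((q,e,1) : Q × E × P) * (1,1,h) = (q,e,h) := by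
          simp [Prod.ext_iff]
        rw [harg, mul_one]
        rfl
      rw [hfac]
      exact Submodule.mul_mem_mul Submodule.mem_top (Submodule.subset_span ⟨h, rfl⟩)
  refine ⟨α - c, ?_, c, hcent, by abel⟩
  rw [hcdef]
  exact hβ α
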